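/- Assume k11 = k21 and k22 = k12, and let R > 0. If for some λ ∈ (0,1) the Nash effort matrix e*(z_NA(R)) equals the Pareto effort matrix a*(z_Pe(λ), λ), then necessarily λ = λ* := (1 + R k11)/(2 + R(k11 + k22)), and λ* ∈ (0,1). Moreover, e*(z_NA(R)) = a*(z_Pe(λ*), λ*) holds if and only if (1 + R k22)/(1 + R(k22 + k11)) = ((1 − λ*)² k22 + (1 − λ*) λ* k11)/((λ*)² k11 + (1 − λ*)² k22). -/

import Mathlib

private lemma vec2_eq' {α : Type*} (a b c d a' b' c' d' : α) :
    (![![a,b],![c,d]] : Fin 2 → Fin 2 → α) = ![![a',b'],![c',d']] ↔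
      a = a' ∧ b = b' ∧ c = c' ∧ d = d' := by
  simp [funext_iff, Fin.forall_fin_two]; tauto

/-- The Pareto-optimal sensitivities `z_Pe(λ)`. -/
noncomputable def zPe (k11 k12 k21 k22 lam : ℝ) : Fin 2 → Fin 2 → ℝ :=
  ![![(1 - lam) ^ 2 * k12 / (lam ^ 2 * k11 + (1 - lam) ^ 2 * k12),
      lam ^ 2 * k11 / (lam ^ 2 * k11 + (1 - lam) ^ 2 * k12)],
    ![(1 - lam) ^ 2 * k22 / (lam ^ 2 * k21 + (1 - lam) ^ 2 * k22),
      lam ^ 2 * k21 / (lam ^ 2 * k21 + (1 - lam) ^ 2 * k22)]]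

/-- The optimal sensitivities `z_NA(R)` in the no-Planner (Nash) model. -/
noncomputable def zNA (k11 k12 k21 k22 R : ℝ) : Fin 2 → Fin 2 → ℝ :=
  ![![(1 + R * k12) / (1 + R * (k11 + k12)), (1 + R * k11) / (1 + R * (k11 + k12))],
    ![(1 + R * k22) / (1 + R * (k21 + k22)), (1 + R * k21) / (1 + R * (k21 + k22))]]

/-- The Pareto effort matrix `a*(z, λ)`. -/
noncomputable def aStar (k11 k12 k21 k22 lam : ℝ) (z : Fin 2 → Fin 2 → ℝ) : Fin 2 → Fin 2 → ℝ :=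
  ![![(lam * z 0 0 + (1 - lam) * z 0 1) / (lam * k11),
      -((lam * z 0 0 + (1 - lam) * z 0 1) / ((1 - lam) * k12))],
    ![-((lam * z 1 0 + (1 - lam) * z 1 1) / (lam * k21)),
      (lam * z 1 0 + (1 - lam) * z 1 1) / ((1 - lam) * k22)]]

/-- The Nash effort matrix `e*(z)`. -/
noncomputable def eStar (k11 k12 k21 k22 : ℝ) (z : Fin 2 → Fin 2 → ℝ) : Fin 2 → Fin 2 → ℝ :=
  ![![z 0 0 / k11, -(z 0 1 / k12)], ![-(z 1 0 / k21), z 1 1 / k22]]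

/-- assume `k11 = k21`, `k22 = k12` and `R > 0`. If the Nash effort
`e*(z_NA(R))` equals a Pareto effort `a*(z_Pe(λ), λ)` for some `λ ∈ (0,1)`, then necessarily
`λ = λ* := (1 + R k11)/(2 + R (k11 + k22))`; moreover `λ* ∈ (0,1)` and
`e*(z_NA(R)) = a*(z_Pe(λ*), λ*)` iff
`(1 + R k22)/(1 + R (k22 + k11)) = ((1-λ*)² k22 + (1-λ*) λ* k11)/((λ*)² k11 + (1-λ*)² k22)`. -/
theorem nash_pareto_symmetric_costs (k11 k12 k21 k22 : ℝ)
    (hk11 : 0 < k11) (hk12 : 0 < k12) (hk21 : 0 < k21) (hk22 : 0 < k22)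
    (h1 : k11 = k21) (h2 : k22 = k12) (R : ℝ) (hR : 0 < R) :
    (∀ lam ∈ Set.Ioo (0 : ℝ) 1,
        eStar k11 k12 k21 k22 (zNA k11 k12 k21 k22 R)
            = aStar k11 k12 k21 k22 lam (zPe k11 k12 k21 k22 lam) →
          lam = (1 + R * k11) / (2 + R * (k11 + k22))) ∧
      (1 + R * k11) / (2 + R * (k11 + k22)) ∈ Set.Ioo (0 : ℝ) 1 ∧
      (eStar k11 k12 k21 k22 (zNA k11 k12 k21 k22 R)
          = aStar k11 k12 k21 k22 ((1 + R * k11) / (2 + R * (k11 + k22)))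
              (zPe k11 k12 k21 k22 ((1 + R * k11) / (2 + R * (k11 + k22)))) ↔
        (1 + R * k22) / (1 + R * (k22 + k11))
          = ((1 - (1 + R * k11) / (2 + R * (k11 + k22))) ^ 2 * k22
              + (1 - (1 + R * k11) / (2 + R * (k11 + k22)))
                * ((1 + R * k11) / (2 + R * (k11 + k22))) * k11)
            / (((1 + R * k11) / (2 + R * (k11 + k22))) ^ 2 * k11
              + (1 - (1 + R * k11) / (2 + R * (k11 + k22))) ^ 2 * k22)) := by
  subst h1 h2
  have hS1 : (0:ℝ) < 1 + R * (k11 + k22) := by positivity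
  have hS2 : (0:ℝ) < 2 + R * (k11 + k22) := by positivity
  set L := (1 + R * k11) / (2 + R * (k11 + k22)) with hLdef
  have hL0 : 0 < L := div_pos (by positivity) hS2
  have hL1 : L < 1 := (div_lt_one hS2).mpr (by nlinarith)
  have h1L : 0 < 1 - L := by linarith
  have ha' : 1 + R * k11 = L * (2 + R * (k11 + k22)) := by rw [hLdef]; field_simp
  have hb' : 1 + R * k22 = (1 - L) * (2 + R * (k11 + k22)) := by
    rw [hLdef]; field_simp; ring
  have hDL : 0 < L ^ 2 * k11 + (1 - L) ^ 2 * k22 := by positivity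
  refine ⟨?_, ⟨hL0, hL1⟩, ?_⟩
  · rintro lam ⟨hl0, hl1⟩ heq
    have h00 := congrFun (congrFun heq 0) 0
    have h11 := congrFun (congrFun heq 1) 1
    simp only [eStar, aStar, zNA, zPe, Matrix.cons_val_zero, Matrix.cons_val_one,
      Matrix.head_cons] at h00 h11
    have hD : 0 < lam ^ 2 * k11 + (1 - lam) ^ 2 * k22 := by positivity
    have hlam1 : (0:ℝ) < 1 - lam := by linarith
    field_simp at h00 h11
    rw [hLdef, eq_div_iff hS2.ne']
    have key : (lam * (2 + R * (k11 + k22)) - (1 + R * k11)) *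
        ((lam ^ 2 * k11 + (1 - lam) ^ 2 * k22) * (k11 * k22)) = 0 := by
      linear_combination (lam*k11*k22)*h00 - ((1-lam)*k11*k22)*h11
    rcases mul_eq_zero.mp key with h | h
    · linarith
    · exfalso; nlinarith [mul_pos hD (mul_pos hk11 hk22)]
  · simp only [eStar, aStar, zNA, zPe, Matrix.cons_val_zero, Matrix.cons_val_one,
      Matrix.head_cons]
    rw [vec2_eq']
    constructor
    · rintro ⟨h00, -, -, -⟩
      field_simp at h00 ⊢
      have key : ((2 + R*(k11+k22)) * (L^2*k11 + (1-L)^2*k22)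
          - (1 + R*(k11+k22)) * ((1-L)*k22 + L*k11)) * ((1-L)*L*k11) = 0 := by
        linear_combination (L*k11)*h00 - (L*k11*(L^2*k11+(1-L)^2*k22))*hb'
      have hQ : (2 + R*(k11+k22)) * (L^2*k11 + (1-L)^2*k22)
          = (1 + R*(k11+k22)) * ((1-L)*k22 + L*k11) := by
        rcases mul_eq_zero.mp key with h | h
        · linarith
        · exfalso; nlinarith [mul_pos (mul_pos h1L hL0) hk11]
      linear_combination (1-L)*hQ + (L^2*k11+(1-L)^2*k22)*hb'
    · intro hT
      field_simp at hT
      have key : ((2 + R*(k11+k22)) * (L^2*k11 + (1-L)^2*k22)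
          - (1 + R*(k11+k22)) * ((1-L)*k22 + L*k11)) * (1-L) = 0 := by
        linear_combination hT - (L^2*k11+(1-L)^2*k22)*hb'
      have hQ : (2 + R*(k11+k22)) * (L^2*k11 + (1-L)^2*k22)
          = (1 + R*(k11+k22)) * ((1-L)*k22 + L*k11) := by
        rcases mul_eq_zero.mp key with h | h
        · linarith
        · exfalso; nlinarith
      refine ⟨?_, ?_, ?_, ?_⟩ <;> field_simp
      · linear_combination (1-L)*hQ + (L^2*k11+(1-L)^2*k22)*hb'
      · linear_combination (-L)*hQ - (L^2*k11+(1-L)^2*k22)*ha'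
      · linear_combination (-(1-L))*hQ - (L^2*k11+(1-L)^2*k22)*hb'
      · linear_combination L*hQ + (L^2*k11+(1-L)^2*k22)*ha'
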